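/- Let f, g : [0,∞) × [0,∞) → [0,∞) be continuous and nonnegative, let h, l : [0,∞) → [0,∞) be continuously differentiable, nondecreasing, and satisfying lim_{s→∞} h(s) = lim_{s→∞} l(s) = ∞, and let H : [0,∞) → (0,∞) be continuous and locally Lipschitz with ∫_{0}^{∞} ds / H(s) = ∞. Suppose f(w,z)·h'(w)·l(z) + g(w,z)·h(w)·l'(z) ≤ H(h(w)·l(z)) for all w, z ≥ 0, and let c₁, c₂ ≥ 0 with h(c₁) > 0 and l(c₂) > 0. Then every solution w, z : [0,T) → [0,∞) of w' = f(w,z), z' = g(w,z) with w(0) = c₁, z(0) = c₂ on a finite interval [0,T) is bounded on [0,T); hence the solution is global. -/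

import Mathlib

open Set MeasureTheory Filter

/-- A function with nonnegative derivative on `Icc a b` is monotone there. -/
lemma mono_of_hasDerivAt_nonneg {φ φ' : ℝ → ℝ} {a b : ℝ}
    (hder : ∀ s ∈ Icc a b, HasDerivAt φ (φ' s) s)
    (hnn : ∀ s ∈ Icc a b, 0 ≤ φ' s) : MonotoneOn φ (Icc a b) := by
  apply monotoneOn_of_deriv_nonneg (convex_Icc a b)
  · intro s hs; exact (hder s hs).continuousAt.continuousWithinAt
  · intro s hs
    rw [interior_Icc] at hs
    exact ((hder s (Ioo_subset_Icc_self hs)).differentiableAt).differentiableWithinAt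
  · intro s hs
    rw [interior_Icc] at hs
    exact (hder s (Ioo_subset_Icc_self hs)).deriv ▸ hnn s (Ioo_subset_Icc_self hs)

/-- Special case in Theorem B, part (1), of the paper: if moreover `f, g ≥ 0`, `h, l`
are nondecreasing and tend to `∞`, and `h(c₁) > 0`, `l(c₂) > 0`, then every solution
of `w' = f(w,z)`, `z' = g(w,z)` on a finite interval `[0,T)` is bounded; hence the
solution is global. -/
theorem global_existence_thmB_part1
    (f g : ℝ → ℝ → ℝ) (h l H : ℝ → ℝ) (c₁ c₂ T : ℝ)
    (hf_cont : Continuous fun p : ℝ × ℝ => f p.1 p.2)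
    (hg_cont : Continuous fun p : ℝ × ℝ => g p.1 p.2)
    (hf_nonneg : ∀ x y : ℝ, 0 ≤ x → 0 ≤ y → 0 ≤ f x y)
    (hg_nonneg : ∀ x y : ℝ, 0 ≤ x → 0 ≤ y → 0 ≤ g x y)
    (hh_diff : ContDiff ℝ 1 h) (hl_diff : ContDiff ℝ 1 l)
    (hh_nonneg : ∀ x, 0 ≤ x → 0 ≤ h x) (hl_nonneg : ∀ x, 0 ≤ x → 0 ≤ l x)
    (hh_mono : MonotoneOn h (Ici (0 : ℝ))) (hl_mono : MonotoneOn l (Ici (0 : ℝ)))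
    (hh_top : Tendsto h atTop atTop) (hl_top : Tendsto l atTop atTop)
    (hH_cont : Continuous H) (hH_pos : ∀ x, 0 ≤ x → 0 < H x)
    (hH_lip : LocallyLipschitz H)
    (hH_div : ¬ IntegrableOn (fun x => 1 / H x) (Ici (0 : ℝ)))
    (hineq : ∀ x y : ℝ, 0 ≤ x → 0 ≤ y →
      f x y * deriv h x * l y + g x y * h x * deriv l y ≤ H (h x * l y))
    (hc₁ : 0 ≤ c₁) (hc₂ : 0 ≤ c₂) (hhc₁ : 0 < h c₁) (hlc₂ : 0 < l c₂)
    (w z : ℝ → ℝ)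
    (hw0 : w 0 = c₁) (hz0 : z 0 = c₂)
    (hnn : ∀ t ∈ Ico (0 : ℝ) T, 0 ≤ w t ∧ 0 ≤ z t)
    (hw' : ∀ t ∈ Ico (0 : ℝ) T, HasDerivAt w (f (w t) (z t)) t)
    (hz' : ∀ t ∈ Ico (0 : ℝ) T, HasDerivAt z (g (w t) (z t)) t) :
    ∃ C : ℝ, ∀ t ∈ Ico (0 : ℝ) T, w t ≤ C ∧ z t ≤ C := by
  classical
  set F : ℝ → ℝ := fun s => ∫ x in (0:ℝ)..s, 1 / H x with hF
  have hH_ne : ∀ x : ℝ, 0 ≤ x → H x ≠ 0 := fun x hx => (hH_pos x hx).ne'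
  -- interval integrability of 1/H on nonnegative intervals
  have hint : ∀ a b : ℝ, 0 ≤ a → a ≤ b →
      IntervalIntegrable (fun x => 1 / H x) volume a b := by
    intro a b ha hab
    apply ContinuousOn.intervalIntegrable
    rw [uIcc_of_le hab]
    exact continuousOn_const.div hH_cont.continuousOn
      (fun x hx => hH_ne x (ha.trans hx.1))
  -- F is monotone on [0, ∞)
  have hFmono : ∀ a b : ℝ, 0 ≤ a → a ≤ b → F a ≤ F b := by
    intro a b ha hab
    have h1 := hint 0 a le_rfl ha
    have h2 := hint a b ha hab
    have hadd := intervalIntegral.integral_add_adjacent_intervals h1 h2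
    have hpos : 0 ≤ ∫ x in a..b, 1 / H x := by
      apply intervalIntegral.integral_nonneg hab
      intro x hx
      exact le_of_lt (one_div_pos.mpr (hH_pos x (ha.trans hx.1)))
    simp only [hF]
    linarith [hadd, hpos]
  -- F has derivative 1/H s at every s ≥ 0
  have hFder : ∀ s : ℝ, 0 ≤ s → HasDerivAt F (1 / H s) s := by
    intro s hs
    apply intervalIntegral.integral_hasDerivAt_right (hint 0 s le_rfl hs)
    · exact ((measurable_const.div hH_cont.measurable).stronglyMeasurable).stronglyMeasurableAtFilter
    · exact continuousAt_const.div hH_cont.continuousAt (hH_ne s hs)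
  -- F is unbounded above on [0, ∞)
  set B : ℝ := T + F (h c₁ * l c₂) with hB
  have hMex : ∃ M : ℝ, 0 ≤ M ∧ B < F M := by
    by_contra hcon
    push_neg at hcon
    apply hH_div
    rw [integrableOn_Ici_iff_integrableOn_Ioi]
    apply integrableOn_Ioi_of_intervalIntegral_norm_bounded B 0
      (b := fun n : ℕ => (n : ℝ)) (l := atTop)
    · intro n
      exact (intervalIntegrable_iff_integrableOn_Ioc_of_le n.cast_nonneg).mp
        (hint 0 n le_rfl n.cast_nonneg)
    · exact tendsto_natCast_atTop_atTop
    · filter_upwards with n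
      have heq : (∫ x in (0:ℝ)..(n:ℝ), ‖1 / H x‖) = ∫ x in (0:ℝ)..(n:ℝ), 1 / H x := by
        apply intervalIntegral.integral_congr
        intro x hx
        rw [uIcc_of_le n.cast_nonneg] at hx
        exact Real.norm_of_nonneg (le_of_lt (one_div_pos.mpr (hH_pos x hx.1)))
      rw [heq]
      exact hcon (n : ℝ) n.cast_nonneg
  obtain ⟨M, hM0, hMB⟩ := hMex
  -- bounds on h and l at infinity
  obtain ⟨K₁, hK₁⟩ := (hh_top.eventually (eventually_ge_atTop (M / l c₂ + 1))).exists_forall_of_atTop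
  obtain ⟨K₂, hK₂⟩ := (hl_top.eventually (eventually_ge_atTop (M / h c₁ + 1))).exists_forall_of_atTop
  refine ⟨max K₁ K₂, ?_⟩
  intro t ht
  obtain ⟨ht0, htT⟩ := ht
  have hsub : Icc (0:ℝ) t ⊆ Ico (0:ℝ) T := fun s hs => ⟨hs.1, lt_of_le_of_lt hs.2 htT⟩
  -- w and z are nondecreasing on [0, t]
  have hwmono : MonotoneOn w (Icc 0 t) :=
    mono_of_hasDerivAt_nonneg (fun s hs => hw' s (hsub hs))
      (fun s hs => hf_nonneg _ _ (hnn s (hsub hs)).1 (hnn s (hsub hs)).2)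
  have hzmono : MonotoneOn z (Icc 0 t) :=
    mono_of_hasDerivAt_nonneg (fun s hs => hz' s (hsub hs))
      (fun s hs => hg_nonneg _ _ (hnn s (hsub hs)).1 (hnn s (hsub hs)).2)
  have hwc₁ : c₁ ≤ w t := hw0 ▸ hwmono ⟨le_rfl, ht0⟩ ⟨ht0, le_rfl⟩ ht0
  have hzc₂ : c₂ ≤ z t := hz0 ▸ hzmono ⟨le_rfl, ht0⟩ ⟨ht0, le_rfl⟩ ht0
  set u : ℝ → ℝ := fun s => h (w s) * l (z s) with hu
  have hu_nonneg : ∀ s ∈ Ico (0:ℝ) T, 0 ≤ u s := fun s hs =>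
    mul_nonneg (hh_nonneg _ (hnn s hs).1) (hl_nonneg _ (hnn s hs).2)
  -- derivative of u
  set D : ℝ → ℝ := fun s =>
    deriv h (w s) * f (w s) (z s) * l (z s) + h (w s) * (deriv l (z s) * g (w s) (z s)) with hD
  have hu_der : ∀ s ∈ Ico (0:ℝ) T, HasDerivAt u (D s) s := by
    intro s hs
    have h1 : HasDerivAt (fun r => h (w r)) (deriv h (w s) * f (w s) (z s)) s :=
      (hh_diff.differentiable one_ne_zero (w s)).hasDerivAt.comp s (hw' s hs)
    have h2 : HasDerivAt (fun r => l (z r)) (deriv l (z s) * g (w s) (z s)) s :=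
      (hl_diff.differentiable one_ne_zero (z s)).hasDerivAt.comp s (hz' s hs)
    exact h1.mul h2
  have hDle : ∀ s ∈ Ico (0:ℝ) T, D s ≤ H (u s) := by
    intro s hs
    have := hineq (w s) (z s) (hnn s hs).1 (hnn s hs).2
    calc D s = f (w s) (z s) * deriv h (w s) * l (z s)
        + g (w s) (z s) * h (w s) * deriv l (z s) := by simp only [hD]; ring
      _ ≤ H (h (w s) * l (z s)) := this
      _ = H (u s) := rfl
  -- ψ s = s - F (u s) is nondecreasing on [0, t]
  set ψ : ℝ → ℝ := fun s => s - F (u s) with hψ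
  have hψmono : MonotoneOn ψ (Icc 0 t) := by
    apply mono_of_hasDerivAt_nonneg (φ' := fun s => 1 - 1 / H (u s) * D s)
    · intro s hs
      exact (hasDerivAt_id s).sub
        (((hFder (u s) (hu_nonneg s (hsub hs))).comp s (hu_der s (hsub hs))))
    · intro s hs
      have hHu := hH_pos (u s) (hu_nonneg s (hsub hs))
      have hle : 1 / H (u s) * D s ≤ 1 := by
        rw [one_div, inv_mul_le_iff₀ hHu, mul_one]
        exact hDle s (hsub hs)
      linarith
  have hFut : F (u t) ≤ t + F (h c₁ * l c₂) := by
    have h0 : ψ 0 ≤ ψ t := hψmono ⟨le_rfl, ht0⟩ ⟨ht0, le_rfl⟩ ht0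
    have hu0 : u 0 = h c₁ * l c₂ := by simp only [hu, hw0, hz0]
    simp only [hψ, hu0] at h0
    linarith
  -- u t ≤ M
  have huM : u t ≤ M := by
    by_contra hcon
    push_neg at hcon
    have := hFmono M (u t) hM0 hcon.le
    have hlt : F (u t) < F M := lt_of_le_of_lt (hFut.trans (by linarith [hB ▸ hMB])) hMB
    -- F (u t) ≤ t + F (..) < T + F (..) = B < F M ≤ F (u t)
    have : F (u t) < F (u t) := lt_of_lt_of_le hlt this
    exact lt_irrefl _ this
  -- transfer the bound to w and z
  have hwt0 : 0 ≤ w t := (hnn t ⟨ht0, htT⟩).1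
  have hzt0 : 0 ≤ z t := (hnn t ⟨ht0, htT⟩).2
  have hlz : l c₂ ≤ l (z t) := hl_mono hc₂ hzt0 hzc₂
  have hhw : h c₁ ≤ h (w t) := hh_mono hc₁ hwt0 hwc₁
  have hhwle : h (w t) ≤ M / l c₂ := by
    rw [le_div_iff₀ hlc₂]
    calc h (w t) * l c₂ ≤ h (w t) * l (z t) :=
          mul_le_mul_of_nonneg_left hlz (hh_nonneg _ hwt0)
      _ ≤ M := huM
  have hlzle : l (z t) ≤ M / h c₁ := by
    rw [le_div_iff₀ hhc₁]
    calc l (z t) * h c₁ ≤ l (z t) * h (w t) :=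
          mul_le_mul_of_nonneg_left hhw (hl_nonneg _ hzt0)
      _ = h (w t) * l (z t) := mul_comm _ _
      _ ≤ M := huM
  constructor
  · refine le_trans ?_ (le_max_left K₁ K₂)
    by_contra hcon
    push_neg at hcon
    have := hK₁ (w t) hcon.le
    linarith
  · refine le_trans ?_ (le_max_right K₁ K₂)
    by_contra hcon
    push_neg at hcon
    have := hK₂ (z t) hcon.le
    linarith
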